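/- Let c ≥ 1, x ∈ ℝ^c, ε > 0, and let 0 < λ < 1 ≤ μ. Let φ : ℝ^c → ℝ^c be a homeomorphism with φ(x) = x such that μ⁻¹·‖a − b‖ ≤ ‖φ(a) − φ(b)‖ ≤ λ·‖a − b‖ for all a, b ∈ closedBall(x, 2ε). Then there exist δ with 0 < δ ≤ ε, an integer k with 1 ≤ k ≤ (1 + 2μ)^c, and vectors v_1, …, v_k ∈ ℝ^c with v_1 = 0 and ‖v_i‖ ≤ δ, such that the maps φ_i : ℝ^c → ℝ^c defined by φ_i(y) = v_i + φ(y) satisfy: (i) each φ_i is λ-Lipschitz on closedBall(x, 2ε) and maps closedBall(x, 2ε) into the open ball ball(x, 2ε); (ii) closedBall(x, δ) ⊆ ⋃_{i=1}^k φ_i(ball(x, δ)). (This is the construction of a contracting blending region from a hyperbolic attracting fixed point: finitely many translates of φ, by vectors of length at most δ, cover the δ-ball around x while all remaining contractions of the larger ball.) -/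

import Mathlib

open Metric Set

open MeasureTheory in
lemma aux_card_bound {c : ℕ} (hc : 1 ≤ c) (x : EuclideanSpace ℝ (Fin c)) {δ r : ℝ}
    (hδ : 0 < δ) (hr : 0 < r) (t : Finset (EuclideanSpace ℝ (Fin c)))
    (hsub : ∀ p ∈ t, p ∈ closedBall x δ)
    (hsep : ∀ p ∈ t, ∀ q ∈ t, p ≠ q → r ≤ dist p q) :
    (t.card : ℝ) * (r/2)^c ≤ (δ + r/2)^c := by
  haveI : Nonempty (Fin c) := ⟨⟨0, hc⟩⟩
  set V := volume (ball (0 : EuclideanSpace ℝ (Fin c)) 1) with hV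
  have hV0 : V ≠ 0 := (measure_ball_pos _ _ one_pos).ne'
  have hVtop : V ≠ ⊤ := measure_ball_lt_top.ne
  have hdisj : (t : Set (EuclideanSpace ℝ (Fin c))).PairwiseDisjoint (fun p => ball p (r/2)) := by
    intro p hp q hq hpq
    exact ball_disjoint_ball (by linarith [hsep p hp q hq hpq])
  have hmeas : volume (⋃ p ∈ t, ball p (r/2))
      = (t.card : ENNReal) * (ENNReal.ofReal ((r/2)^c) * V) := by
    rw [measure_biUnion_finset hdisj (fun p _ => measurableSet_ball)]
    rw [Finset.sum_congr rfl (fun p _ => by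
      rw [Measure.addHaar_ball volume p (by positivity : (0:ℝ) ≤ r/2),
        finrank_euclideanSpace_fin]), Finset.sum_const, nsmul_eq_mul]
  have hsub2 : (⋃ p ∈ t, ball p (r/2)) ⊆ closedBall x (δ + r/2) := by
    simp only [iUnion_subset_iff]
    intro p hp y hy
    have h1 := hsub p hp
    rw [mem_closedBall] at h1 ⊢
    rw [mem_ball] at hy
    have := dist_triangle y p x
    linarith
  have hle : (t.card : ENNReal) * ENNReal.ofReal ((r/2)^c) * V
      ≤ ENNReal.ofReal ((δ + r/2)^c) * V := by
    rw [mul_assoc, ← hmeas]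
    calc volume (⋃ p ∈ t, ball p (r/2)) ≤ volume (closedBall x (δ + r/2)) :=
          measure_mono hsub2
    _ = _ := by
        rw [Measure.addHaar_closedBall volume x (by positivity : (0:ℝ) ≤ δ + r/2),
          finrank_euclideanSpace_fin]
  have hle2 := (ENNReal.mul_le_mul_iff_left hV0 hVtop).1 hle
  have h3 : ENNReal.ofReal ((t.card : ℝ) * (r/2)^c) ≤ ENNReal.ofReal ((δ + r/2)^c) := by
    rwa [ENNReal.ofReal_mul (by positivity), ENNReal.ofReal_natCast]
  exact (ENNReal.ofReal_le_ofReal_iff (by positivity)).1 h3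


/-- **Contracting blending region from a hyperbolic attracting fixed point.**
Given a homeomorphism `φ` of `ℝ^c` fixing `x`, which on the closed ball of radius `2ε`
is a `λ`-contraction with bi-Lipschitz lower bound `μ⁻¹`, there are `δ ∈ (0, ε]` and at
most `(1+2μ)^c` translates `φ_i = v_i + φ` (with `v_1 = 0`, `‖v_i‖ ≤ δ`) which are
`λ`-Lipschitz on `closedBall x (2ε)`, map it into `ball x (2ε)`, and whose images of
`ball x δ` cover `closedBall x δ`. -/
theorem contracting_blending_region_from_fixed_point
    (c : ℕ) (hc : 1 ≤ c) (x : EuclideanSpace ℝ (Fin c)) (ε lam μ : ℝ)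
    (hε : 0 < ε) (hlam0 : 0 < lam) (hlam1 : lam < 1) (hμ : 1 ≤ μ)
    (φ : EuclideanSpace ℝ (Fin c) ≃ₜ EuclideanSpace ℝ (Fin c)) (hx : φ x = x)
    (hbilip : ∀ a ∈ closedBall x (2 * ε), ∀ b ∈ closedBall x (2 * ε),
      μ⁻¹ * ‖a - b‖ ≤ ‖φ a - φ b‖ ∧ ‖φ a - φ b‖ ≤ lam * ‖a - b‖) :
    ∃ (δ : ℝ), 0 < δ ∧ δ ≤ ε ∧
    ∃ (k : ℕ) (hk : 1 ≤ k) (v : Fin k → EuclideanSpace ℝ (Fin c)),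
      (k : ℝ) ≤ (1 + 2 * μ) ^ c ∧
      v ⟨0, hk⟩ = 0 ∧
      (∀ i, ‖v i‖ ≤ δ) ∧
      (∀ i, ∀ a ∈ closedBall x (2 * ε), ∀ b ∈ closedBall x (2 * ε),
        ‖(v i + φ a) - (v i + φ b)‖ ≤ lam * ‖a - b‖) ∧
      (∀ i, MapsTo (fun y => v i + φ y) (closedBall x (2 * ε)) (ball x (2 * ε))) ∧
      closedBall x δ ⊆ ⋃ i, (fun y => v i + φ y) '' ball x δ := by
  have hμ0 : (0:ℝ) < μ := lt_of_lt_of_le one_pos hμ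
  set δ : ℝ := ε * (1 - lam) with hδdef
  have hδ : 0 < δ := mul_pos hε (by linarith)
  have hδε : δ ≤ ε := by nlinarith
  set r : ℝ := μ⁻¹ * δ with hrdef
  have hr : 0 < r := by positivity
  have hrδ : r ≤ δ := by
    rw [hrdef]
    nlinarith [inv_le_one_of_one_le₀ hμ]
  have hδball : closedBall x δ ⊆ closedBall x (2*ε) :=
    closedBall_subset_closedBall (by linarith)
  -- card bound for separated sets
  have hbound : ∀ t : Finset (EuclideanSpace ℝ (Fin c)),
      (∀ p ∈ t, p ∈ closedBall x δ) → (∀ p ∈ t, ∀ q ∈ t, p ≠ q → r ≤ dist p q) →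
      (t.card : ℝ) ≤ (1 + 2*μ)^c := by
    intro t h1 h2
    have := aux_card_bound hc x hδ hr t h1 h2
    have hkey : (δ + r/2) = (r/2) * (1 + 2*μ) := by
      rw [hrdef]; field_simp; ring
    rw [hkey, mul_pow] at this
    have hp : (0:ℝ) < (r/2)^c := by positivity
    calc (t.card : ℝ) = (t.card : ℝ) * (r/2)^c / (r/2)^c := by field_simp
    _ ≤ (r/2)^c * (1 + 2*μ)^c / (r/2)^c := by
        gcongr
    _ = (1 + 2*μ)^c := by field_simp
  -- maximal separated set
  classical
  have hS : ∃ t : Finset (EuclideanSpace ℝ (Fin c)),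
      ((∀ p ∈ t, p ∈ closedBall x δ) ∧ x ∈ t ∧
        (∀ p ∈ t, ∀ q ∈ t, p ≠ q → r ≤ dist p q)) ∧
      (∀ y ∈ closedBall x δ, ∃ p ∈ t, dist y p < r) := by
    set S : Set ℕ := {n | ∃ t : Finset (EuclideanSpace ℝ (Fin c)),
      ((∀ p ∈ t, p ∈ closedBall x δ) ∧ x ∈ t ∧
        (∀ p ∈ t, ∀ q ∈ t, p ≠ q → r ≤ dist p q)) ∧ t.card = n} with hSdef
    have hSne : 1 ∈ S := by
      refine ⟨{x}, ⟨?_, ?_, ?_⟩, ?_⟩ <;> simp [hδ.le]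
    have hSbdd : ∀ n ∈ S, n ≤ ⌊(1 + 2*μ)^c⌋₊ := by
      rintro n ⟨t, ⟨h1, _, h3⟩, hcard⟩
      exact Nat.le_floor (hcard ▸ hbound t h1 h3)
    have hbdd : BddAbove S := ⟨⌊(1 + 2*μ)^c⌋₊, fun n hn => hSbdd n hn⟩
    have hnS : sSup S ∈ S := Nat.sSup_mem ⟨1, hSne⟩ hbdd
    obtain ⟨t, ⟨h1, h2, h3⟩, hcard⟩ := hnS
    refine ⟨t, ⟨h1, h2, h3⟩, ?_⟩
    intro y hy
    by_contra h
    push_neg at h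
    have hyt : y ∉ t := by
      intro hyt
      have := h y hyt
      simp only [dist_self] at this
      linarith
    have hnew : t.card + 1 ∈ S := by
      refine ⟨insert y t, ⟨?_, ?_, ?_⟩, ?_⟩
      · intro p hp
        rcases Finset.mem_insert.1 hp with rfl | hp
        · exact hy
        · exact h1 p hp
      · exact Finset.mem_insert_of_mem h2
      · intro p hp q hq hpq
        rcases Finset.mem_insert.1 hp with hp' | hp' <;>
          rcases Finset.mem_insert.1 hq with hq' | hq'
        · exact absurd (hp'.trans hq'.symm) hpq
        · rw [hp']; exact h q hq'
        · rw [hq', dist_comm]; exact h p hp' 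
        · exact h3 p hp' q hq' hpq
      · rw [Finset.card_insert_of_notMem hyt]
    have := le_csSup hbdd hnew
    omega
  obtain ⟨t, ⟨htsub, hxt, htsep⟩, htcover⟩ := hS
  -- ball inclusion
  have hball : ball x r ⊆ φ '' ball x δ := by
    have hU : IsOpen (φ '' ball x δ) := φ.isOpenMap _ isOpen_ball
    have hK : IsCompact (φ '' closedBall x δ) :=
      (isCompact_closedBall x δ).image φ.continuous
    have hUK : φ '' ball x δ ⊆ φ '' closedBall x δ :=
      fun _ ⟨a, ha, h⟩ => ⟨a, ball_subset_closedBall ha, h⟩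
    refine IsPreconnected.subset_left_of_subset_union hU hK.isClosed.isOpen_compl
      (Disjoint.mono_left hUK disjoint_compl_right) ?_ ?_ (convex_ball x r).isPreconnected
    · intro y hy
      by_cases hyK : y ∈ φ '' closedBall x δ
      · left
        obtain ⟨a, ha, rfl⟩ := hyK
        have haε : a ∈ closedBall x (2*ε) := hδball ha
        have hxε : x ∈ closedBall x (2*ε) := mem_closedBall_self (by linarith)
        have hlow := (hbilip a haε x hxε).1
        rw [hx] at hlow
        rw [mem_ball, dist_eq_norm, hrdef] at hy
        refine ⟨a, ?_, rfl⟩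
        rw [mem_ball, dist_eq_norm]
        have hlt : μ⁻¹ * ‖a - x‖ < μ⁻¹ * δ := lt_of_le_of_lt hlow hy
        exact lt_of_mul_lt_mul_left hlt (by positivity)
      · right; exact hyK
    · exact ⟨x, mem_ball_self hr, ⟨x, mem_ball_self hδ, hx⟩⟩
  -- assembly
  refine ⟨δ, hδ, hδε, ?_⟩
  set l : List (EuclideanSpace ℝ (Fin c)) := x :: (t.erase x).toList with hl
  have hlen : l.length = t.card := by
    have h1 : 1 ≤ t.card := Finset.card_pos.2 ⟨x, hxt⟩
    rw [hl]
    simp only [List.length_cons, Finset.length_toList, Finset.card_erase_of_mem hxt]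
    omega
  have hmem : ∀ i : Fin l.length, l.get i ∈ t := by
    intro i
    have hmem' : l.get i ∈ l := l.get_mem i
    rcases List.mem_cons.1 hmem' with h | h
    · rw [h]; exact hxt
    · exact Finset.mem_of_mem_erase (Finset.mem_toList.1 h)
  have hk : 1 ≤ l.length := by rw [hl]; simp
  refine ⟨l.length, hk, fun i => l.get i - x, ?_, ?_, ?_, ?_, ?_, ?_⟩
  · rw [hlen]; exact hbound t htsub htsep
  · exact sub_self x
  · intro i
    have := htsub _ (hmem i)
    rwa [mem_closedBall, dist_eq_norm] at this
  · intro i a ha b hb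
    have := (hbilip a ha b hb).2
    simpa [add_sub_add_left_eq_sub] using this
  · intro i a ha
    have hup := (hbilip a ha x (mem_closedBall_self (by linarith))).2
    rw [hx] at hup
    have hva : ‖l.get i - x‖ ≤ δ := by
      have := htsub _ (hmem i)
      rwa [mem_closedBall, dist_eq_norm] at this
    have hax : ‖a - x‖ ≤ 2*ε := by rwa [mem_closedBall, dist_eq_norm] at ha
    show (l.get i - x) + φ a ∈ ball x (2*ε)
    rw [mem_ball, dist_eq_norm]
    have heq : l.get i - x + φ a - x = (l.get i - x) + (φ a - x) := by abel
    calc ‖l.get i - x + φ a - x‖ = ‖(l.get i - x) + (φ a - x)‖ := by rw [heq]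
    _ ≤ ‖l.get i - x‖ + ‖φ a - x‖ := norm_add_le _ _
    _ ≤ δ + lam * ‖a - x‖ := add_le_add hva hup
    _ ≤ δ + lam * (2*ε) := by nlinarith
    _ < 2*ε := by rw [hδdef]; nlinarith
  · intro y hy
    obtain ⟨p, hpt, hpy⟩ := htcover y hy
    obtain ⟨i, hi⟩ : ∃ i : Fin l.length, l.get i = p := by
      have hpl : p ∈ l := by
        by_cases hpx : p = x
        · rw [hpx, hl]; exact List.mem_cons_self
        · rw [hl]
          exact List.mem_cons_of_mem _
            (Finset.mem_toList.2 (Finset.mem_erase.2 ⟨hpx, hpt⟩))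
      obtain ⟨n, h⟩ := List.mem_iff_get.1 hpl
      exact ⟨n, h⟩
    rw [mem_iUnion]
    refine ⟨i, ?_⟩
    have hmb : y - (l.get i - x) ∈ ball x r := by
      rw [mem_ball, dist_eq_norm, hi]
      have heq : y - (p - x) - x = y - p := by abel
      rw [heq, ← dist_eq_norm]
      exact hpy
    obtain ⟨z, hz, hφz⟩ := hball hmb
    refine ⟨z, hz, ?_⟩
    show l.get i - x + φ z = y
    rw [hφz]
    abel
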